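/- With Φ(v, w, x, y) = (v, ½ Σ α_i (x_i² + y_i²)) as above, the derivative DΦ at a point p = (v, w, x, y) is surjective if and only if the vectors α_i for those indices i with (x_i, y_i) ≠ (0,0) span ℝᵏ. -/

import Mathlib

/-- For the local-normal-form moment map `Φ(v,w,x,y) = (v, ½ Σᵢ (xᵢ²+yᵢ²) • αᵢ)`,
the derivative at `p = (v,w,x,y)` is surjective iff the weights `αᵢ` with
`(xᵢ, yᵢ) ≠ (0,0)` span `ℝᵏ`. -/
theorem normal_form_fderiv_surjective_iff
    {m n k : ℕ} (α : Fin n → (Fin k → ℝ))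
    (Φ : ((Fin m → ℝ) × (Fin m → ℝ) × (Fin n → ℝ) × (Fin n → ℝ)) →
        ((Fin m → ℝ) × (Fin k → ℝ)))
    (hΦ : ∀ v w x y, Φ (v, w, x, y)
        = (v, ((1 : ℝ)/2) • ∑ i, (x i ^ 2 + y i ^ 2) • α i))
    (v w : Fin m → ℝ) (x y : Fin n → ℝ) :
    Function.Surjective (fderiv ℝ Φ (v, w, x, y)) ↔
      Submodule.span ℝ {a | ∃ i : Fin n, (x i ≠ 0 ∨ y i ≠ 0) ∧ a = α i} = ⊤ := by
  classical
  let E : Type := (Fin m → ℝ) × (Fin m → ℝ) × (Fin n → ℝ) × (Fin n → ℝ)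
  -- the candidate derivative, as a linear map
  let S : E →ₗ[ℝ] (Fin k → ℝ) :=
    { toFun := fun p => ∑ i, (x i * p.2.2.1 i + y i * p.2.2.2 i) • α i
      map_add' := by
        intro p q
        rw [← Finset.sum_add_distrib]
        refine Finset.sum_congr rfl fun i _ => ?_
        have h1 : (p + q).2.2.1 i = p.2.2.1 i + q.2.2.1 i := rfl
        have h2 : (p + q).2.2.2 i = p.2.2.2 i + q.2.2.2 i := rfl
        rw [h1, h2, ← add_smul]; congr 1; ring
      map_smul' := by
        intro c p
        simp only [RingHom.id_apply]
        rw [Finset.smul_sum]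
        refine Finset.sum_congr rfl fun i _ => ?_
        have h1 : (c • p).2.2.1 i = c * p.2.2.1 i := rfl
        have h2 : (c • p).2.2.2 i = c * p.2.2.2 i := rfl
        rw [h1, h2, smul_smul]; congr 1; ring }
  let Llin : E →ₗ[ℝ] (Fin m → ℝ) × (Fin k → ℝ) := (LinearMap.fst ℝ _ _).prod S
  -- coordinate projections as continuous linear maps
  let Px : Fin n → (E →L[ℝ] ℝ) := fun i =>
    (ContinuousLinearMap.proj i).comp
      ((ContinuousLinearMap.fst ℝ (Fin n → ℝ) (Fin n → ℝ)).comp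
        ((ContinuousLinearMap.snd ℝ (Fin m → ℝ) ((Fin n → ℝ) × (Fin n → ℝ))).comp
          (ContinuousLinearMap.snd ℝ (Fin m → ℝ) ((Fin m → ℝ) × (Fin n → ℝ) × (Fin n → ℝ)))))
  let Py : Fin n → (E →L[ℝ] ℝ) := fun i =>
    (ContinuousLinearMap.proj i).comp
      ((ContinuousLinearMap.snd ℝ (Fin n → ℝ) (Fin n → ℝ)).comp
        ((ContinuousLinearMap.snd ℝ (Fin m → ℝ) ((Fin n → ℝ) × (Fin n → ℝ))).comp
          (ContinuousLinearMap.snd ℝ (Fin m → ℝ) ((Fin m → ℝ) × (Fin n → ℝ) × (Fin n → ℝ)))))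
  have key : HasFDerivAt Φ (LinearMap.toContinuousLinearMap Llin) (v, w, x, y) := by
    have hfun : Φ = fun p : E => (p.1, ((1:ℝ)/2) • ∑ i, (p.2.2.1 i ^ 2 + p.2.2.2 i ^ 2) • α i) := by
      funext p
      obtain ⟨a, b, c, d⟩ := p
      exact hΦ a b c d
    rw [hfun]
    have hPx : ∀ i, HasFDerivAt (fun p : E => p.2.2.1 i) (Px i) (v, w, x, y) :=
      fun i => (Px i).hasFDerivAt
    have hPy : ∀ i, HasFDerivAt (fun p : E => p.2.2.2 i) (Py i) (v, w, x, y) :=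
      fun i => (Py i).hasFDerivAt
    have hsqx : ∀ i, HasFDerivAt (fun p : E => p.2.2.1 i ^ 2)
        (x i • Px i + x i • Px i) (v, w, x, y) := by
      intro i
      have h := (hPx i).fun_mul (hPx i)
      simpa [pow_two] using h
    have hsqy : ∀ i, HasFDerivAt (fun p : E => p.2.2.2 i ^ 2)
        (y i • Py i + y i • Py i) (v, w, x, y) := by
      intro i
      have h := (hPy i).fun_mul (hPy i)
      simpa [pow_two] using h
    have hsum : HasFDerivAt (fun p : E => ∑ i, (p.2.2.1 i ^ 2 + p.2.2.2 i ^ 2) • α i)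
        (∑ i, ((x i • Px i + x i • Px i) + (y i • Py i + y i • Py i)).smulRight (α i))
        (v, w, x, y) := by
      apply HasFDerivAt.fun_sum
      intro i _
      exact ((hsqx i).add (hsqy i)).smul_const (α i)
    have h := HasFDerivAt.prodMk (hasFDerivAt_fst (p := ((v, w, x, y) : E))) (hsum.fun_const_smul ((1:ℝ)/2))
    refine h.congr_fderiv (Eq.symm ?_)
    apply ContinuousLinearMap.ext
    intro p
    refine Prod.ext rfl ?_
    show (∑ i, (x i * p.2.2.1 i + y i * p.2.2.2 i) • α i) = ((1:ℝ)/2) •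
      ((∑ i, ((x i • Px i + x i • Px i) + (y i • Py i + y i • Py i)).smulRight (α i)) p)
    rw [ContinuousLinearMap.sum_apply, Finset.smul_sum]
    refine Finset.sum_congr rfl fun i _ => ?_
    simp only [ContinuousLinearMap.smulRight_apply, ContinuousLinearMap.add_apply,
      ContinuousLinearMap.smul_apply, smul_eq_mul, smul_smul]
    have hPxp : Px i p = p.2.2.1 i := rfl
    have hPyp : Py i p = p.2.2.2 i := rfl
    rw [hPxp, hPyp]
    congr 1; ring
  rw [key.fderiv]
  have hcoe : ⇑(LinearMap.toContinuousLinearMap Llin) = ⇑Llin := rfl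
  rw [hcoe]
  have hLS : Function.Surjective Llin ↔ Function.Surjective S := by
    constructor
    · intro h b
      obtain ⟨p, hp⟩ := h (0, b)
      exact ⟨p, congrArg Prod.snd hp⟩
    · rintro h ⟨u, b⟩
      obtain ⟨p, hp⟩ := h b
      refine ⟨(u, p.2), ?_⟩
      have h2 : S (u, p.2) = S p := rfl
      show ((u, p.2).1, S (u, p.2)) = (u, b)
      rw [h2, hp]
  rw [hLS, ← LinearMap.range_eq_top]
  have hrange : LinearMap.range S
      = Submodule.span ℝ {a | ∃ i : Fin n, (x i ≠ 0 ∨ y i ≠ 0) ∧ a = α i} := by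
    apply le_antisymm
    · rintro _ ⟨p, rfl⟩
      simp only [S, LinearMap.coe_mk, AddHom.coe_mk]
      apply Submodule.sum_mem
      intro i _
      by_cases hx0 : x i = 0
      · by_cases hy0 : y i = 0
        · simp [hx0, hy0]
        · exact Submodule.smul_mem _ _ (Submodule.subset_span ⟨i, Or.inr hy0, rfl⟩)
      · exact Submodule.smul_mem _ _ (Submodule.subset_span ⟨i, Or.inl hx0, rfl⟩)
    · rw [Submodule.span_le]
      rintro a ⟨i, hi, rfl⟩
      rcases hi with hx0 | hy0
      · refine ⟨((0, 0, Pi.single i (x i)⁻¹, 0) : E), ?_⟩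
        simp only [S, LinearMap.coe_mk, AddHom.coe_mk]
        rw [Finset.sum_eq_single i]
        · simp [mul_inv_cancel₀ hx0]
        · intro j _ hj
          simp [Pi.single_eq_of_ne hj]
        · simp
      · refine ⟨((0, 0, 0, Pi.single i (y i)⁻¹) : E), ?_⟩
        simp only [S, LinearMap.coe_mk, AddHom.coe_mk]
        rw [Finset.sum_eq_single i]
        · simp [mul_inv_cancel₀ hy0]
        · intro j _ hj
          simp [Pi.single_eq_of_ne hj]
        · simp
  rw [hrange]
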